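/- Let K be a compact topological group, let V and U be finite-dimensional real vector spaces with continuous linear representations of K, let ω be a K-invariant alternating bilinear form on V, and let f : V → U be a K-equivariant linear map. If the kernel of ω intersects the kernel of f trivially (i.e. {v ∈ V : ω(v, w) = 0 for all w ∈ V} ∩ ker f = {0}), then the kernel of the restriction of ω to the fixed subspace V^K intersects the kernel of the restriction of f to V^K trivially: {v ∈ V^K : ω(v, u) = 0 for all u ∈ V^K} ∩ ker f = {0}. -/

import Mathlib

/-- The submodule of vectors fixed by a linear representation `ρ` of a group `K`. -/
def fixedSubmodule {K V : Type*} [Group K] [AddCommGroup V] [Module ℝ V]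
    (ρ : K →* (V ≃ₗ[ℝ] V)) : Submodule ℝ V where
  carrier := {v | ∀ k : K, ρ k v = v}
  add_mem' := by
    intro a b ha hb k
    simp [map_add, ha k, hb k]
  zero_mem' := by
    intro k
    simp
  smul_mem' := by
    intro c v hv k
    simp [map_smul, hv k]

open MeasureTheory

/-- Linear-algebra content of Proposition 3.2: if a `K`-invariant alternating bilinear form
`ω` on `V` and a `K`-equivariant linear map `f : V → U` satisfy `ker ω ∩ ker f = 0`, then the
kernel of the restriction of `ω` to the fixed subspace `V^K` intersects `ker f` trivially. -/
theorem minimal_degeneracy_on_fixed_subspace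
    {K V U : Type*} [Group K] [TopologicalSpace K] [IsTopologicalGroup K] [CompactSpace K]
    [NormedAddCommGroup V] [NormedSpace ℝ V] [FiniteDimensional ℝ V]
    [NormedAddCommGroup U] [NormedSpace ℝ U] [FiniteDimensional ℝ U]
    (ρ : K →* (V ≃ₗ[ℝ] V)) (hρ : Continuous fun p : K × V => ρ p.1 p.2)
    (σ : K →* (U ≃ₗ[ℝ] U)) (hσ : Continuous fun p : K × U => σ p.1 p.2)
    (ω : V →ₗ[ℝ] V →ₗ[ℝ] ℝ)
    (hω : ∀ (k : K) (u v : V), ω (ρ k u) (ρ k v) = ω u v)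
    (halt : ∀ v : V, ω v v = 0)
    (f : V →ₗ[ℝ] U)
    (hf : ∀ (k : K) (v : V), f (ρ k v) = σ k (f v))
    (htriv : ∀ v : V, (∀ w : V, ω v w = 0) → f v = 0 → v = 0) :
    ∀ v ∈ fixedSubmodule ρ, (∀ u ∈ fixedSubmodule ρ, ω v u = 0) → f v = 0 → v = 0 := by
  intro v hv hωv hfv
  borelize K
  haveI : Nonempty K := ⟨1⟩
  set μ : Measure K := Measure.haarMeasure ⊤ with hμ
  haveI : IsProbabilityMeasure μ := by
    constructor
    rw [← TopologicalSpace.PositiveCompacts.coe_top (α := K)]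
    exact Measure.haarMeasure_self
  apply htriv v _ hfv
  intro w
  -- continuity of the orbit map
  have hcont : ∀ w : V, Continuous fun k : K => ρ k w := fun w =>
    hρ.comp (continuous_id.prodMk continuous_const)
  have hint : ∀ w : V, Integrable (fun k : K => ρ k w) μ := fun w =>
    (hcont w).integrable_of_hasCompactSupport (HasCompactSupport.of_compactSpace _)
  -- the average of the orbit of `w`
  set P : V := ∫ k : K, ρ k w ∂μ with hP
  have hPfix : P ∈ fixedSubmodule ρ := by
    intro k
    have hk : Continuous ((ρ k : V →ₗ[ℝ] V) : V → V) :=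
      LinearMap.continuous_of_finiteDimensional _
    have : ρ k P = ∫ g : K, ρ k (ρ g w) ∂μ := by
      rw [hP]
      exact
        (ContinuousLinearMap.integral_comp_comm
          ⟨(ρ k : V →ₗ[ℝ] V), hk⟩ (hint w)).symm
    rw [this]
    have h2 : ∀ g : K, ρ k (ρ g w) = ρ (k * g) w := by
      intro g; rw [map_mul]; rfl
    simp_rw [h2]
    exact integral_mul_left_eq_self (fun g : K => ρ g w) k
  -- ω v (ρ g w) = ω v w for every g, since v is fixed
  have hconst : ∀ g : K, ω v (ρ g w) = ω v w := by
    intro g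
    have := hω g⁻¹ v (ρ g w)
    rw [hv g⁻¹] at this
    rw [← this]
    congr 1
    have : ρ g⁻¹ (ρ g w) = ρ (g⁻¹ * g) w := by rw [map_mul]; rfl
    rw [this, inv_mul_cancel, map_one]; rfl
  -- therefore ω v w = ω v P = 0
  have hωcont : Continuous ((ω v : V →ₗ[ℝ] ℝ) : V → ℝ) :=
    LinearMap.continuous_of_finiteDimensional _
  have key : ω v P = ω v w := by
    have : ω v P = ∫ g : K, ω v (ρ g w) ∂μ :=
      (ContinuousLinearMap.integral_comp_comm ⟨(ω v : V →ₗ[ℝ] ℝ), hωcont⟩ (hint w)).symm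
    rw [this]
    simp_rw [hconst]
    simp
  rw [← key]
  exact hωv P hPfix
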